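/- Consider the random walk 𝐒 on the spider SP(N) with N legs, started at the origin, where from the origin the walk moves to the first vertex of leg j with probability p_j (Σ p_j = 1), and on each leg it moves up or down with probability 1/2 each. Then for integers n ≥ 1, k ≥ 0, 1 ≤ j ≤ n, and any leg ℓ, the probability that the walk is at vertex v(2j, ℓ) at time 2n+2k, given it is at the origin at time 2k, equals 2·p_ℓ·P(S(2n) = 2j), where S is a simple symmetric random walk on ℤ. -/

import Mathlib

open MeasureTheory ProbabilityTheory ENNReal

/-- A vertex of the spider `SP(N)`: `none` is the origin, and `some (j, r)` is the vertex
at height `r+1` on leg `j`. -/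
abbrev SpiderVertex (N : ℕ) := Option (Fin N × ℕ)

/-- One-step transition probabilities of the random walk on the spider `SP(N)`:
from the origin it moves to the first vertex of leg `j` with probability `p j`;
from any other vertex it moves one step up or one step down its leg with
probability `1/2` each. -/
noncomputable def spiderKernel {N : ℕ} (p : Fin N → ℝ) :
    SpiderVertex N → SpiderVertex N → ℝ≥0∞
  | none, none => 0
  | none, some (j, r) => if r = 0 then ENNReal.ofReal (p j) else 0
  | some (_, r), none => if r = 0 then 1/2 else 0
  | some (j, r), some (j', r') => if j' = j ∧ (r' + 1 = r ∨ r' = r + 1) then 1/2 else 0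

set_option linter.unusedSectionVars false

namespace SpiderAux

lemma ennreal_cancel {a b a' b' : ℝ≥0∞} (h1 : a ≤ a') (h2 : b ≤ b')
    (h3 : a' + b' ≤ a + b) (h4 : a' + b' ≠ ⊤) : a = a' := by
  refine le_antisymm h1 ?_
  have hb' : b' ≠ ⊤ := by intro h; exact h4 (by simp [h])
  have : a' + b' ≤ a + b' := le_trans h3 (add_le_add_right h2 a)
  exact (ENNReal.add_le_add_iff_right hb').1 this

lemma tsum_pointwise_eq {ι : Type*} {a b : ι → ℝ≥0∞} (hab : ∀ i, a i ≤ b i)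
    (hle : ∑' i, b i ≤ ∑' i, a i) (hfin : ∑' i, b i ≠ ⊤) (i0 : ι) : a i0 = b i0 := by
  classical
  refine le_antisymm (hab i0) ?_
  have ha : ∑' i, a i = a i0 + ∑' i, if i = i0 then 0 else a i :=
    ENNReal.summable.tsum_eq_add_tsum_ite' i0
  have hb : ∑' i, b i = b i0 + ∑' i, if i = i0 then 0 else b i :=
    ENNReal.summable.tsum_eq_add_tsum_ite' i0
  have hmono : ∑' i, (if i = i0 then 0 else a i) ≤ ∑' i, (if i = i0 then 0 else b i) :=
    ENNReal.tsum_le_tsum (fun i => by by_cases h : i = i0 <;> simp [h, hab i])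
  have hfin2 : ∑' i, (if i = i0 then 0 else b i) ≠ ⊤ := by
    refine ne_top_of_le_ne_top hfin (ENNReal.tsum_le_tsum (fun i => ?_))
    split_ifs <;> simp
  have : b i0 + ∑' i, (if i = i0 then 0 else b i)
      ≤ a i0 + ∑' i, (if i = i0 then 0 else b i) := by
    calc b i0 + ∑' i, (if i = i0 then 0 else b i) = ∑' i, b i := hb.symm
    _ ≤ ∑' i, a i := hle
    _ = a i0 + ∑' i, (if i = i0 then 0 else a i) := ha
    _ ≤ a i0 + ∑' i, (if i = i0 then 0 else b i) := add_le_add_right hmono _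
  exact (ENNReal.add_le_add_iff_right hfin2).1 this

lemma tsum_ite_eq_of_iff {γ : Type*} (a : γ) (c : ℝ≥0∞) (P : γ → Prop) [DecidablePred P]
    (h : ∀ x, P x ↔ x = a) : ∑' x, (if P x then c else 0) = c := by
  classical
  rw [tsum_congr (fun x => by rw [if_congr (h x) rfl rfl])]
  exact tsum_ite_eq a (fun _ => c)

lemma tsum_option {α : Type*} (f : Option α → ℝ≥0∞) :
    ∑' o : Option α, f o = f none + ∑' a : α, f (some a) := by
  classical
  have h1 : ∀ o : Option α, f o = (if o = none then f none else 0)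
      + (Option.elim o 0 (fun a => f (some a))) := by
    rintro (_ | a) <;> simp
  rw [tsum_congr h1, ENNReal.tsum_add]
  congr 1
  · exact tsum_ite_eq_of_iff none (f none) _ (fun x => Iff.rfl)
  · rw [← tsum_subtype_eq_of_support_subset (s := Set.range (Option.some (α := α)))
        (by
          rintro (_|a) hx
          · simp at hx
          · exact ⟨a, rfl⟩)]
    rw [← (Equiv.ofInjective _ (Option.some_injective α)).tsum_eq
        (fun x : Set.range (Option.some (α := α)) => Option.elim x.1 0 (fun a => f (some a)))]
    exact tsum_congr (fun a => rfl)


lemma rowsum {N : ℕ} (p : Fin N → ℝ) (hp0 : ∀ j, 0 ≤ p j) (hp : ∑ j, p j = 1)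
    (u : SpiderVertex N) : ∑' v : SpiderVertex N, spiderKernel p u v = 1 := by
  classical
  rcases u with _ | ⟨j, _ | r⟩
  · rw [tsum_option]
    have h1 : spiderKernel p (none : SpiderVertex N) none = 0 := rfl
    have h2 : ∀ x : Fin N × ℕ, spiderKernel p (none : SpiderVertex N) (some x)
        = if x.2 = 0 then ENNReal.ofReal (p x.1) else 0 := by rintro ⟨a, b⟩; rfl
    rw [h1, tsum_congr h2, zero_add, ENNReal.tsum_prod']
    have h3 : ∀ a : Fin N, (∑' r : ℕ, if r = 0 then ENNReal.ofReal (p a) else 0)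
        = ENNReal.ofReal (p a) := fun a => tsum_ite_eq 0 _
    rw [tsum_congr h3, tsum_fintype, ← ENNReal.ofReal_sum_of_nonneg (fun j _ => hp0 j), hp,
      ENNReal.ofReal_one]
  · rw [tsum_option]
    have h1 : spiderKernel p (some (j, 0)) none = 1/2 := rfl
    have h2 : ∀ x : Fin N × ℕ, spiderKernel p (some (j, 0)) (some x)
        = if x = (j, 1) then (1/2 : ℝ≥0∞) else 0 := by
      rintro ⟨a, b⟩
      show (if a = j ∧ (b + 1 = 0 ∨ b = 0 + 1) then (1/2 : ℝ≥0∞) else 0) = _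
      have hiff : (a = j ∧ (b + 1 = 0 ∨ b = 0 + 1)) ↔ (a, b) = ((j, 1) : Fin N × ℕ) := by
        rw [Prod.mk.injEq]
        constructor
        · rintro ⟨rfl, hb | hb⟩
          · omega
          · exact ⟨rfl, by omega⟩
        · rintro ⟨rfl, rfl⟩
          exact ⟨rfl, Or.inr rfl⟩
      rw [if_congr hiff rfl rfl]
    rw [h1, tsum_congr h2, tsum_ite_eq]
    exact ENNReal.add_halves 1
  · rw [tsum_option]
    have h1 : spiderKernel p (some (j, r + 1)) none = 0 := by
      show (if r + 1 = 0 then (1/2 : ℝ≥0∞) else 0) = 0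
      simp
    have h2 : ∀ x : Fin N × ℕ, spiderKernel p (some (j, r + 1)) (some x)
        = (if x = (j, r) then (1/2 : ℝ≥0∞) else 0)
          + (if x = (j, r + 2) then (1/2 : ℝ≥0∞) else 0) := by
      rintro ⟨a, b⟩
      show (if a = j ∧ (b + 1 = r + 1 ∨ b = r + 1 + 1) then (1/2 : ℝ≥0∞) else 0) = _
      by_cases hc1 : (a, b) = ((j, r) : Fin N × ℕ)
      · rw [Prod.mk.injEq] at hc1; obtain ⟨rfl, rfl⟩ := hc1
        rw [if_pos ⟨rfl, Or.inl rfl⟩, if_pos rfl, if_neg (by rw [Prod.mk.injEq]; rintro ⟨-, hh⟩; omega),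
          add_zero]
      · by_cases hc2 : (a, b) = ((j, r + 2) : Fin N × ℕ)
        · rw [Prod.mk.injEq] at hc2; obtain ⟨rfl, rfl⟩ := hc2
          rw [if_pos ⟨rfl, Or.inr rfl⟩, if_neg hc1, if_pos rfl, zero_add]
        · rw [if_neg, if_neg hc1, if_neg hc2, add_zero]
          rintro ⟨rfl, hc | hc⟩
          · exact hc1 (by rw [Prod.mk.injEq]; exact ⟨rfl, by omega⟩)
          · exact hc2 (by rw [Prod.mk.injEq]; exact ⟨rfl, by omega⟩)
    rw [h1, tsum_congr h2, zero_add, ENNReal.tsum_add, tsum_ite_eq, tsum_ite_eq]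
    exact ENNReal.add_halves 1

section Walk

variable {Ωs : Type*} [MeasurableSpace Ωs] {N : ℕ}
variable {μ : Measure Ωs} {Y : ℕ → Ωs → SpiderVertex N} {p : Fin N → ℝ}

/-- The event that the walk follows the trajectory `h` up to time `m`. -/
def histSet (Y : ℕ → Ωs → SpiderVertex N) (m : ℕ) (h : ℕ → SpiderVertex N) : Set Ωs :=
  {ω | ∀ i ≤ m, Y i ω = h i}

/-- Product of kernel entries along `h` up to time `m`. -/
noncomputable def wt (p : Fin N → ℝ) (m : ℕ) (h : ℕ → SpiderVertex N) : ℝ≥0∞ :=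
  ∏ i ∈ Finset.range m, spiderKernel p (h i) (h (i + 1))

lemma measure_inter_le_restrict (μ : Measure Ωs) (A B : Set Ωs) :
    μ (A ∩ B) ≤ μ.restrict A B := by
  have hB : B ⊆ toMeasurable (μ.restrict A) B := subset_toMeasurable _ _
  calc μ (A ∩ B) ≤ μ (toMeasurable (μ.restrict A) B ∩ A) :=
        measure_mono (fun x hx => ⟨hB hx.2, hx.1⟩)
  _ = μ.restrict A (toMeasurable (μ.restrict A) B) :=
        (Measure.restrict_apply (measurableSet_toMeasurable _ _)).symm
  _ = μ.restrict A B := measure_toMeasurable B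

lemma restrict_hist [IsProbabilityMeasure μ]
    (hM : ∀ (n : ℕ) (h : ℕ → SpiderVertex N) (v : SpiderVertex N),
      μ {ω | ∀ i ≤ n, Y i ω = h i} ≠ 0 →
      (μ[|{ω | ∀ i ≤ n, Y i ω = h i}]) {ω | Y (n+1) ω = v} = spiderKernel p (h n) v)
    (m : ℕ) (h : ℕ → SpiderVertex N) (v : SpiderVertex N) (hne : μ (histSet Y m h) ≠ 0) :
    μ.restrict (histSet Y m h) {ω | Y (m+1) ω = v}
      = μ (histSet Y m h) * spiderKernel p (h m) v := by
  have hthis := hM m h v hne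
  rw [ProbabilityTheory.cond, Measure.smul_apply, smul_eq_mul] at hthis
  have hfin : μ (histSet Y m h) ≠ ⊤ := measure_ne_top μ _
  show μ.restrict {ω | ∀ i ≤ m, Y i ω = h i} {ω | Y (m+1) ω = v}
      = μ {ω | ∀ i ≤ m, Y i ω = h i} * spiderKernel p (h m) v
  calc μ.restrict {ω | ∀ i ≤ m, Y i ω = h i} {ω | Y (m+1) ω = v}
      = (μ {ω | ∀ i ≤ m, Y i ω = h i} * (μ {ω | ∀ i ≤ m, Y i ω = h i})⁻¹)
        * μ.restrict {ω | ∀ i ≤ m, Y i ω = h i} {ω | Y (m+1) ω = v} := by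
        rw [ENNReal.mul_inv_cancel (by exact hne) (by exact measure_ne_top μ _), one_mul]
  _ = μ {ω | ∀ i ≤ m, Y i ω = h i}
        * ((μ {ω | ∀ i ≤ m, Y i ω = h i})⁻¹
          * μ.restrict {ω | ∀ i ≤ m, Y i ω = h i} {ω | Y (m+1) ω = v}) :=
        mul_assoc _ _ _
  _ = μ {ω | ∀ i ≤ m, Y i ω = h i} * spiderKernel p (h m) v := by rw [hthis]

lemma chain [IsProbabilityMeasure μ]
    (hY0 : ∀ ω, Y 0 ω = none)
    (hM : ∀ (n : ℕ) (h : ℕ → SpiderVertex N) (v : SpiderVertex N),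
      μ {ω | ∀ i ≤ n, Y i ω = h i} ≠ 0 →
      (μ[|{ω | ∀ i ≤ n, Y i ω = h i}]) {ω | Y (n+1) ω = v} = spiderKernel p (h n) v)
    (hp0 : ∀ j, 0 ≤ p j) (hp : ∑ j, p j = 1) :
    ∀ (m : ℕ) (h : ℕ → SpiderVertex N),
      μ (histSet Y m h) = if h 0 = none then wt p m h else 0 := by
  intro m
  induction m with
  | zero =>
    intro h
    have he : histSet Y 0 h = {ω | Y 0 ω = h 0} := by
      ext ω; simp [histSet, Nat.le_zero]
    rw [he]
    by_cases h0 : h 0 = none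
    · have he2 : {ω | Y 0 ω = h 0} = Set.univ := by
        ext ω; simp [hY0 ω, h0]
      rw [he2, if_pos h0]
      simp [wt]
    · have he2 : {ω | Y 0 ω = h 0} = ∅ :=
        Set.eq_empty_iff_forall_notMem.2 (fun ω hω => h0 (((hY0 ω) ▸ hω : none = h 0)).symm)
      rw [he2, if_neg h0, measure_empty]
  | succ m ih =>
    intro h
    have hsplit : histSet Y (m+1) h = histSet Y m h ∩ {ω | Y (m+1) ω = h (m+1)} := by
      ext ω
      constructor
      · intro hω
        exact ⟨fun i hi => hω i (le_trans hi (Nat.le_succ m)), hω (m+1) le_rfl⟩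
      · rintro ⟨ha, hb⟩ i hi
        rcases eq_or_lt_of_le hi with rfl | hlt
        · exact hb
        · exact ha i (Nat.lt_succ_iff.1 hlt)
    have hwsucc : wt p (m+1) h = wt p m h * spiderKernel p (h m) (h (m+1)) :=
      Finset.prod_range_succ _ m
    by_cases h0 : h 0 = none
    swap
    · rw [if_neg h0]
      have h1 := ih h; rw [if_neg h0] at h1
      exact measure_mono_null (hsplit ▸ Set.inter_subset_left) h1
    rw [if_pos h0]
    have ihh := ih h; rw [if_pos h0] at ihh
    by_cases hC : μ (histSet Y m h) = 0
    · have hw : wt p m h = 0 := ihh.symm.trans hC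
      have hz : μ (histSet Y (m+1) h) = 0 :=
        measure_mono_null (hsplit ▸ Set.inter_subset_left) hC
      rw [hz, hwsucc, hw, zero_mul]
    · have hab : ∀ v, μ (histSet Y m h ∩ {ω | Y (m+1) ω = v})
          ≤ μ (histSet Y m h) * spiderKernel p (h m) v := fun v => by
        rw [← restrict_hist hM m h v hC]
        exact measure_inter_le_restrict μ _ _
      have hcover : histSet Y m h
          ⊆ ⋃ v : SpiderVertex N, (histSet Y m h ∩ {ω | Y (m+1) ω = v}) := fun ω hω =>
        Set.mem_iUnion.2 ⟨Y (m+1) ω, hω, rfl⟩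
      have hsum_b : ∑' v : SpiderVertex N, μ (histSet Y m h) * spiderKernel p (h m) v
          = μ (histSet Y m h) := by
        rw [ENNReal.tsum_mul_left, rowsum p hp0 hp (h m), mul_one]
      have hsum_a : ∑' v : SpiderVertex N, μ (histSet Y m h) * spiderKernel p (h m) v
          ≤ ∑' v : SpiderVertex N, μ (histSet Y m h ∩ {ω | Y (m+1) ω = v}) := by
        rw [hsum_b]
        exact le_trans (measure_mono hcover) (measure_iUnion_le _)
      have key := tsum_pointwise_eq hab hsum_a
        (by rw [hsum_b]; exact measure_ne_top μ _) (h (m+1))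
      rw [hsplit, key, hwsucc, ihh]


/-- Extension of a finite trajectory to `ℕ`. -/
def extFin {m : ℕ} (f : Fin (m + 1) → SpiderVertex N) : ℕ → SpiderVertex N :=
  fun i => if h : i < m + 1 then f ⟨i, h⟩ else none

def traj (Y : ℕ → Ωs → SpiderVertex N) (m : ℕ) (ω : Ωs) : Fin (m + 1) → SpiderVertex N :=
  fun i => Y i ω

noncomputable def Wf (p : Fin N → ℝ) {m : ℕ} (f : Fin (m + 1) → SpiderVertex N) : ℝ≥0∞ :=
  ∏ i : Fin m, spiderKernel p (f i.castSucc) (f i.succ)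

lemma extFin_fin {m : ℕ} (f : Fin (m + 1) → SpiderVertex N) (i : Fin (m + 1)) :
    extFin f i.val = f i := by
  rw [extFin, dif_pos i.isLt]

lemma preimage_singleton (m : ℕ) (f : Fin (m + 1) → SpiderVertex N) :
    traj Y m ⁻¹' {f} = histSet Y m (extFin f) := by
  ext ω
  simp only [Set.mem_preimage, Set.mem_singleton_iff, funext_iff, histSet, Set.mem_setOf_eq]
  constructor
  · intro hω i hi
    have h2 := hω ⟨i, Nat.lt_succ_of_le hi⟩
    rw [extFin, dif_pos (Nat.lt_succ_of_le hi)]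
    exact h2
  · intro hω i
    have h2 := hω i.val (Nat.lt_succ_iff.1 i.isLt)
    rwa [extFin_fin] at h2

lemma hist_fin [IsProbabilityMeasure μ]
    (hY0 : ∀ ω, Y 0 ω = none)
    (hM : ∀ (n : ℕ) (h : ℕ → SpiderVertex N) (v : SpiderVertex N),
      μ {ω | ∀ i ≤ n, Y i ω = h i} ≠ 0 →
      (μ[|{ω | ∀ i ≤ n, Y i ω = h i}]) {ω | Y (n+1) ω = v} = spiderKernel p (h n) v)
    (hp0 : ∀ j, 0 ≤ p j) (hp : ∑ j, p j = 1) (m : ℕ) (f : Fin (m + 1) → SpiderVertex N) :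
    μ (traj Y m ⁻¹' {f}) = if f 0 = none then Wf p f else 0 := by
  rw [preimage_singleton, chain hY0 hM hp0 hp m (extFin f)]
  have h0 : extFin f 0 = f 0 := extFin_fin f 0
  rw [h0]
  congr 1
  rw [wt, Wf,
    ← Fin.prod_univ_eq_prod_range (fun i => spiderKernel p (extFin f i) (extFin f (i + 1))) m]
  apply Finset.prod_congr rfl
  intro i _
  have e1 : extFin f i.val = f i.castSucc := by
    rw [extFin, dif_pos (show i.val < m + 1 from Nat.lt_succ_of_lt i.isLt)]
    exact congrArg f (Fin.val_injective (by simp))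
  have e2 : extFin f (i.val + 1) = f i.succ := by
    rw [extFin, dif_pos (show i.val + 1 < m + 1 from Nat.succ_lt_succ i.isLt)]
    exact congrArg f (Fin.val_injective (by simp))
  rw [e1, e2]

lemma snoc_zero' {m : ℕ} (g : Fin (m + 1) → SpiderVertex N) (v : SpiderVertex N) :
    (Fin.snoc g v : Fin (m + 2) → SpiderVertex N) 0 = g 0 := by
  have h : (0 : Fin (m + 2)) = Fin.castSucc 0 := rfl
  rw [h, Fin.snoc_castSucc]

lemma Wf_snoc (p : Fin N → ℝ) {m : ℕ} (g : Fin (m + 1) → SpiderVertex N) (v : SpiderVertex N) :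
    Wf p (Fin.snoc g v) = Wf p g * spiderKernel p (g (Fin.last m)) v := by
  rw [Wf, Fin.prod_univ_castSucc]
  congr 1
  · rw [Wf]
    apply Finset.prod_congr rfl
    intro i _
    rw [Fin.succ_castSucc, Fin.snoc_castSucc, Fin.snoc_castSucc]
  · rw [Fin.succ_last, Fin.snoc_castSucc, Fin.snoc_last]

def snocEquiv (V : Type*) (m : ℕ) : (Fin (m + 2) → V) ≃ (Fin (m + 1) → V) × V where
  toFun f := (Fin.init f, f (Fin.last (m + 1)))
  invFun gv := Fin.snoc gv.1 gv.2
  left_inv f := Fin.snoc_init_self f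
  right_inv gv := by
    obtain ⟨g, v⟩ := gv
    simp [Fin.init_snoc, Fin.snoc_last]

lemma total (hp0 : ∀ j, 0 ≤ p j) (hp : ∑ j, p j = 1) :
    ∀ m : ℕ, ∑' f : Fin (m + 1) → SpiderVertex N, (if f 0 = none then Wf p f else 0) = 1 := by
  classical
  intro m
  induction m with
  | zero =>
    rw [← (Equiv.funUnique (Fin 1) (SpiderVertex N)).symm.tsum_eq
      (fun f => if f 0 = none then Wf p f else 0)]
    have hc : ∀ v : SpiderVertex N,
        (if ((Equiv.funUnique (Fin 1) (SpiderVertex N)).symm v) 0 = none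
          then Wf p ((Equiv.funUnique (Fin 1) (SpiderVertex N)).symm v) else 0)
        = if v = none then 1 else 0 := by
      intro v
      have hW : Wf p ((Equiv.funUnique (Fin 1) (SpiderVertex N)).symm v) = 1 := by
        rw [Wf]; exact Fin.prod_univ_zero _
      rw [hW]; rfl
    rw [tsum_congr hc]
    exact tsum_ite_eq none 1
  | succ m ih =>
    have hc : ∀ g : Fin (m + 1) → SpiderVertex N,
        (∑' v : SpiderVertex N,
          (if (Fin.snoc g v : Fin (m + 2) → SpiderVertex N) 0 = none
            then Wf p (Fin.snoc g v) else 0))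
        = if g 0 = none then Wf p g else 0 := by
      intro g
      have hterm : ∀ v : SpiderVertex N,
          (if (Fin.snoc g v : Fin (m + 2) → SpiderVertex N) 0 = none
            then Wf p (Fin.snoc g v) else 0)
          = if g 0 = none then Wf p g * spiderKernel p (g (Fin.last m)) v else 0 := fun v => by
        rw [snoc_zero', Wf_snoc]
      rw [tsum_congr hterm]
      by_cases h0 : g 0 = none
      · simp only [if_pos h0]
        rw [ENNReal.tsum_mul_left, rowsum p hp0 hp, mul_one]
      · simp only [if_neg h0, tsum_zero]
    calc ∑' f : Fin (m + 1 + 1) → SpiderVertex N, (if f 0 = none then Wf p f else 0)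
        = ∑' gv : (Fin (m + 1) → SpiderVertex N) × SpiderVertex N,
            (if (Fin.snoc gv.1 gv.2 : Fin (m + 2) → SpiderVertex N) 0 = none
              then Wf p (Fin.snoc gv.1 gv.2) else 0) := by
          rw [← ((snocEquiv (SpiderVertex N) m).symm.tsum_eq
            (fun f => if f 0 = none then Wf p f else 0))]
          exact tsum_congr (fun gv => rfl)
    _ = ∑' g : Fin (m + 1) → SpiderVertex N, ∑' v : SpiderVertex N,
            (if (Fin.snoc g v : Fin (m + 2) → SpiderVertex N) 0 = none
              then Wf p (Fin.snoc g v) else 0) := ENNReal.tsum_prod'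
    _ = ∑' g : Fin (m + 1) → SpiderVertex N, (if g 0 = none then Wf p g else 0) :=
          tsum_congr hc
    _ = 1 := ih

open Classical in
lemma master [IsProbabilityMeasure μ]
    (hY0 : ∀ ω, Y 0 ω = none)
    (hM : ∀ (n : ℕ) (h : ℕ → SpiderVertex N) (v : SpiderVertex N),
      μ {ω | ∀ i ≤ n, Y i ω = h i} ≠ 0 →
      (μ[|{ω | ∀ i ≤ n, Y i ω = h i}]) {ω | Y (n+1) ω = v} = spiderKernel p (h n) v)
    (hp0 : ∀ j, 0 ≤ p j) (hp : ∑ j, p j = 1) (m : ℕ)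
    (Q : Set (Fin (m + 1) → SpiderVertex N)) :
    μ (traj Y m ⁻¹' Q) = ∑' f : Fin (m + 1) → SpiderVertex N,
      (if f ∈ Q ∧ f 0 = none then Wf p f else 0) := by
  classical
  have htot : ∑' f : Fin (m + 1) → SpiderVertex N, μ (traj Y m ⁻¹' {f}) = 1 := by
    rw [tsum_congr (fun f => hist_fin hY0 hM hp0 hp m f)]
    exact total hp0 hp m
  have hcov : ∀ R : Set (Fin (m + 1) → SpiderVertex N),
      μ (traj Y m ⁻¹' R) ≤ ∑' f : R, μ (traj Y m ⁻¹' {f.val}) := by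
    intro R
    have hR : traj Y m ⁻¹' R = ⋃ f : R, traj Y m ⁻¹' {f.val} := by
      ext ω
      simp only [Set.mem_preimage, Set.mem_iUnion]
      constructor
      · intro hω; exact ⟨⟨traj Y m ω, hω⟩, rfl⟩
      · rintro ⟨f, hf⟩
        rw [Set.mem_singleton_iff] at hf
        rw [hf]; exact f.2
    rw [hR]
    exact measure_iUnion_le _
  have hsplit : (∑' f : Q, μ (traj Y m ⁻¹' {f.val}))
      + (∑' f : ↥(Qᶜ), μ (traj Y m ⁻¹' {f.val})) = 1 := by
    exact (Summable.tsum_add_tsum_compl (s := Q) (f := fun g => μ (traj Y m ⁻¹' {g}))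
      ENNReal.summable ENNReal.summable).trans htot
  have h1 : (1 : ℝ≥0∞) ≤ μ (traj Y m ⁻¹' Q) + μ (traj Y m ⁻¹' (Qᶜ)) := by
    have hu : (Set.univ : Set Ωs) = traj Y m ⁻¹' Q ∪ traj Y m ⁻¹' (Qᶜ) := by
      rw [← Set.preimage_union, Set.union_compl_self, Set.preimage_univ]
    calc (1 : ℝ≥0∞) = μ Set.univ := measure_univ.symm
    _ = μ (traj Y m ⁻¹' Q ∪ traj Y m ⁻¹' (Qᶜ)) := by rw [← hu]
    _ ≤ _ := measure_union_le _ _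
  have key : μ (traj Y m ⁻¹' Q) = ∑' f : Q, μ (traj Y m ⁻¹' {f.val}) := by
    refine ennreal_cancel (hcov Q) (hcov (Qᶜ)) ?_ ?_
    · rw [hsplit]; exact h1
    · rw [hsplit]; exact one_ne_top
  rw [key]
  rw [tsum_subtype Q (fun g => μ (traj Y m ⁻¹' {g}))]
  apply tsum_congr
  intro f
  rw [Set.indicator_apply]
  by_cases hf : f ∈ Q
  · rw [if_pos hf, hist_fin hY0 hM hp0 hp m f]
    by_cases h0 : f 0 = none
    · rw [if_pos h0, if_pos ⟨hf, h0⟩]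
    · rw [if_neg h0, if_neg (fun hc => h0 hc.2)]
  · rw [if_neg hf, if_neg (fun hc => hf hc.1)]


open Classical in
lemma tsum_split {m : ℕ} (t : Fin (m + 1)) (F : (Fin (m + 1) → SpiderVertex N) → ℝ≥0∞) :
    ∑' f : Fin (m + 1) → SpiderVertex N, F f
      = ∑' u : SpiderVertex N, ∑' f : Fin (m + 1) → SpiderVertex N,
          (if f t = u then F f else 0) := by
  symm
  rw [ENNReal.tsum_comm]
  apply tsum_congr
  intro f
  have hc : ∀ u, (if f t = u then F f else 0) = if u = f t then F f else 0 := fun u => by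
    by_cases h : f t = u
    · rw [if_pos h, if_pos h.symm]
    · rw [if_neg h, if_neg (fun hcc => h hcc.symm)]
  rw [tsum_congr hc]
  exact tsum_ite_eq (f t) (fun _ => F f)

open Classical in
lemma measure_Dset [IsProbabilityMeasure μ]
    (hY0 : ∀ ω, Y 0 ω = none)
    (hM : ∀ (n : ℕ) (h : ℕ → SpiderVertex N) (v : SpiderVertex N),
      μ {ω | ∀ i ≤ n, Y i ω = h i} ≠ 0 →
      (μ[|{ω | ∀ i ≤ n, Y i ω = h i}]) {ω | Y (n+1) ω = v} = spiderKernel p (h n) v)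
    (hp0 : ∀ j, 0 ≤ p j) (hp : ∑ j, p j = 1) {c t : ℕ} (hct : c ≤ t) (u : SpiderVertex N) :
    μ {ω | Y c ω = none ∧ Y t ω = u}
      = ∑' f : Fin (t + 1) → SpiderVertex N,
          (if (f ⟨c, Nat.lt_succ_of_le hct⟩ = none ∧ f (Fin.last t) = u) ∧ f 0 = none
            then Wf p f else 0) := by
  have hpre : {ω | Y c ω = none ∧ Y t ω = u}
      = traj Y t ⁻¹' {f | f ⟨c, Nat.lt_succ_of_le hct⟩ = none ∧ f (Fin.last t) = u} := rfl
  rw [hpre, master hY0 hM hp0 hp t _]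
  refine tsum_congr (fun f => ?_)
  by_cases hq : (f ⟨c, Nat.lt_succ_of_le hct⟩ = none ∧ f (Fin.last t) = u) ∧ f 0 = none
  · rw [if_pos hq]; exact if_pos hq
  · rw [if_neg hq]; exact if_neg hq

open Classical in
lemma sum_reorg [IsProbabilityMeasure μ]
    (hY0 : ∀ ω, Y 0 ω = none)
    (hM : ∀ (n : ℕ) (h : ℕ → SpiderVertex N) (v : SpiderVertex N),
      μ {ω | ∀ i ≤ n, Y i ω = h i} ≠ 0 →
      (μ[|{ω | ∀ i ≤ n, Y i ω = h i}]) {ω | Y (n+1) ω = v} = spiderKernel p (h n) v)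
    (hp0 : ∀ j, 0 ≤ p j) (hp : ∑ j, p j = 1) {c t : ℕ} (hct : c ≤ t) (v : SpiderVertex N) :
    ∑' f : Fin (t + 1) → SpiderVertex N,
        (if f ⟨c, Nat.lt_succ_of_le hct⟩ = none ∧ f 0 = none
          then Wf p f * spiderKernel p (f (Fin.last t)) v else 0)
      = ∑' u : SpiderVertex N, μ {ω | Y c ω = none ∧ Y t ω = u} * spiderKernel p u v := by
  rw [tsum_split (Fin.last t) _]
  apply tsum_congr
  intro u
  rw [measure_Dset hY0 hM hp0 hp hct u, ← ENNReal.tsum_mul_right]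
  apply tsum_congr
  intro f
  by_cases h1 : f (Fin.last t) = u
  · by_cases h2 : f ⟨c, Nat.lt_succ_of_le hct⟩ = none ∧ f 0 = none
    · rw [if_pos h1, if_pos h2, if_pos ⟨⟨h2.1, h1⟩, h2.2⟩, h1]
    · rw [if_pos h1, if_neg h2,
        if_neg (fun hcc => h2 ⟨hcc.1.1, hcc.2⟩), zero_mul]
  · rw [if_neg h1, if_neg (fun hcc => h1 hcc.1.2), zero_mul]

open Classical in
lemma step_D [IsProbabilityMeasure μ]
    (hY0 : ∀ ω, Y 0 ω = none)
    (hM : ∀ (n : ℕ) (h : ℕ → SpiderVertex N) (v : SpiderVertex N),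
      μ {ω | ∀ i ≤ n, Y i ω = h i} ≠ 0 →
      (μ[|{ω | ∀ i ≤ n, Y i ω = h i}]) {ω | Y (n+1) ω = v} = spiderKernel p (h n) v)
    (hp0 : ∀ j, 0 ≤ p j) (hp : ∑ j, p j = 1) {c t : ℕ} (hct : c ≤ t) (v : SpiderVertex N) :
    μ {ω | Y c ω = none ∧ Y (t + 1) ω = v}
      = ∑' u : SpiderVertex N, μ {ω | Y c ω = none ∧ Y t ω = u} * spiderKernel p u v := by
  rw [measure_Dset hY0 hM hp0 hp (le_trans hct (Nat.le_succ t)) v,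
    ← sum_reorg hY0 hM hp0 hp hct v]
  have hcs : (⟨c, Nat.lt_succ_of_le (le_trans hct (Nat.le_succ t))⟩ : Fin (t + 1 + 1))
      = Fin.castSucc ⟨c, Nat.lt_succ_of_le hct⟩ := rfl
  calc ∑' f : Fin (t + 1 + 1) → SpiderVertex N,
        (if (f ⟨c, Nat.lt_succ_of_le (le_trans hct (Nat.le_succ t))⟩ = none
            ∧ f (Fin.last (t + 1)) = v) ∧ f 0 = none
          then Wf p f else 0)
      = ∑' gv : (Fin (t + 1) → SpiderVertex N) × SpiderVertex N,
          (if ((Fin.snoc gv.1 gv.2 : Fin (t + 2) → SpiderVertex N)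
                ⟨c, Nat.lt_succ_of_le (le_trans hct (Nat.le_succ t))⟩ = none
              ∧ (Fin.snoc gv.1 gv.2 : Fin (t + 2) → SpiderVertex N) (Fin.last (t + 1)) = v)
            ∧ (Fin.snoc gv.1 gv.2 : Fin (t + 2) → SpiderVertex N) 0 = none
            then Wf p (Fin.snoc gv.1 gv.2) else 0) := by
        rw [← ((snocEquiv (SpiderVertex N) t).symm.tsum_eq
          (fun f : Fin (t + 2) → SpiderVertex N =>
            if (f ⟨c, Nat.lt_succ_of_le (le_trans hct (Nat.le_succ t))⟩ = none
                ∧ f (Fin.last (t + 1)) = v) ∧ f 0 = none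
              then Wf p f else 0))]
        exact tsum_congr (fun gv => rfl)
  _ = ∑' g : Fin (t + 1) → SpiderVertex N, ∑' u : SpiderVertex N,
          (if ((Fin.snoc g u : Fin (t + 2) → SpiderVertex N)
                ⟨c, Nat.lt_succ_of_le (le_trans hct (Nat.le_succ t))⟩ = none
              ∧ (Fin.snoc g u : Fin (t + 2) → SpiderVertex N) (Fin.last (t + 1)) = v)
            ∧ (Fin.snoc g u : Fin (t + 2) → SpiderVertex N) 0 = none
            then Wf p (Fin.snoc g u) else 0) := ENNReal.tsum_prod'
  _ = ∑' g : Fin (t + 1) → SpiderVertex N,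
        (if g ⟨c, Nat.lt_succ_of_le hct⟩ = none ∧ g 0 = none
          then Wf p g * spiderKernel p (g (Fin.last t)) v else 0) := by
        apply tsum_congr
        intro g
        have hterm : ∀ u : SpiderVertex N,
            (if ((Fin.snoc g u : Fin (t + 2) → SpiderVertex N)
                  ⟨c, Nat.lt_succ_of_le (le_trans hct (Nat.le_succ t))⟩ = none
                ∧ (Fin.snoc g u : Fin (t + 2) → SpiderVertex N) (Fin.last (t + 1)) = v)
              ∧ (Fin.snoc g u : Fin (t + 2) → SpiderVertex N) 0 = none
              then Wf p (Fin.snoc g u) else 0)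
            = if u = v then (if g ⟨c, Nat.lt_succ_of_le hct⟩ = none ∧ g 0 = none
                then Wf p g * spiderKernel p (g (Fin.last t)) v else 0) else 0 := by
          intro u
          rw [hcs, Fin.snoc_castSucc, Fin.snoc_last, snoc_zero', Wf_snoc]
          by_cases huv : u = v
          · subst huv
            by_cases hg : g ⟨c, Nat.lt_succ_of_le hct⟩ = none ∧ g 0 = none
            · rw [if_pos ⟨⟨hg.1, rfl⟩, hg.2⟩, if_pos rfl, if_pos hg]
            · rw [if_neg (fun hcc => hg ⟨hcc.1.1, hcc.2⟩), if_pos rfl, if_neg hg]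
          · rw [if_neg (fun hcc => huv hcc.1.2), if_neg huv]
        rw [tsum_congr hterm]
        exact tsum_ite_eq v _
  _ = ∑' f : Fin (t + 1) → SpiderVertex N,
        (if f ⟨c, Nat.lt_succ_of_le hct⟩ = none ∧ f 0 = none
          then Wf p f * spiderKernel p (f (Fin.last t)) v else 0) := rfl

/-- The time-`t` distribution of the abstract spider chain started at the origin. -/
noncomputable def qdist (p : Fin N → ℝ) : ℕ → SpiderVertex N → ℝ≥0∞
  | 0, v => if v = none then 1 else 0
  | (t+1), v => ∑' u : SpiderVertex N, qdist p t u * spiderKernel p u v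

open Classical in
lemma measure_D_eq_q [IsProbabilityMeasure μ]
    (hY0 : ∀ ω, Y 0 ω = none)
    (hM : ∀ (n : ℕ) (h : ℕ → SpiderVertex N) (v : SpiderVertex N),
      μ {ω | ∀ i ≤ n, Y i ω = h i} ≠ 0 →
      (μ[|{ω | ∀ i ≤ n, Y i ω = h i}]) {ω | Y (n+1) ω = v} = spiderKernel p (h n) v)
    (hp0 : ∀ j, 0 ≤ p j) (hp : ∑ j, p j = 1) (c : ℕ) :
    ∀ (t : ℕ) (v : SpiderVertex N),
      μ {ω | Y c ω = none ∧ Y (c + t) ω = v}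
        = μ {ω | Y c ω = none} * qdist p t v := by
  intro t
  induction t with
  | zero =>
    intro v
    by_cases hv : v = none
    · subst hv
      have he : {ω | Y c ω = none ∧ Y (c + 0) ω = none} = {ω | Y c ω = none} := by
        ext ω; simp
      rw [he]
      simp [qdist]
    · have he : {ω | Y c ω = none ∧ Y (c + 0) ω = v} = ∅ := by
        ext ω
        simp only [Set.mem_setOf_eq, Set.mem_empty_iff_false, iff_false, not_and, Nat.add_zero]
        intro h1 h2
        exact hv (h2 ▸ h1 ▸ rfl)
      rw [he, measure_empty]
      simp [qdist, hv]
  | succ t ih =>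
    intro v
    have hstep := step_D hY0 hM hp0 hp (Nat.le_add_right c t) v
    rw [show c + (t + 1) = (c + t) + 1 from rfl, hstep, tsum_congr (fun u => by rw [ih u]),
      tsum_congr (fun u => mul_assoc (μ {ω | Y c ω = none}) (qdist p t u) _),
      ENNReal.tsum_mul_left]
    rfl


open Classical in
lemma restrict_eq_inter [IsProbabilityMeasure μ]
    (hY0 : ∀ ω, Y 0 ω = none)
    (hM : ∀ (n : ℕ) (h : ℕ → SpiderVertex N) (v : SpiderVertex N),
      μ {ω | ∀ i ≤ n, Y i ω = h i} ≠ 0 →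
      (μ[|{ω | ∀ i ≤ n, Y i ω = h i}]) {ω | Y (n+1) ω = v} = spiderKernel p (h n) v)
    (hp0 : ∀ j, 0 ≤ p j) (hp : ∑ j, p j = 1) {c t : ℕ} (hct : c ≤ t) (v : SpiderVertex N) :
    μ.restrict {ω | Y c ω = none} {ω | Y (t + 1) ω = v}
      = μ {ω | Y c ω = none ∧ Y (t + 1) ω = v} := by
  set A : Set Ωs := {ω | Y c ω = none} with hAdef
  set B : Set Ωs := {ω | Y (t + 1) ω = v} with hBdef
  have hABinter : {ω | Y c ω = none ∧ Y (t + 1) ω = v} = A ∩ B := rfl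
  refine le_antisymm ?_ (by rw [hABinter]; exact measure_inter_le_restrict μ A B)
  -- the subtype of admissible histories
  set Sset : Set (Fin (t + 1) → SpiderVertex N) :=
    {f | f ⟨c, Nat.lt_succ_of_le hct⟩ = none} with hSdef
  set T : ↥Sset → Set Ωs := fun f => traj Y t ⁻¹' {f.val} with hTdef
  have hA : A = ⋃ f : ↥Sset, T f := by
    ext ω
    simp only [Set.mem_iUnion]
    constructor
    · intro hω
      refine ⟨⟨traj Y t ω, ?_⟩, rfl⟩
      exact hω
    · rintro ⟨f, hf⟩
      rw [hTdef] at hf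
      simp only [Set.mem_preimage, Set.mem_singleton_iff] at hf
      show Y c ω = none
      have hc2 : traj Y t ω ⟨c, Nat.lt_succ_of_le hct⟩ = none := by
        rw [hf]; exact f.2
      exact hc2
  -- Step 1: subadditivity of restrict over the covering
  have step1 : μ.restrict A B ≤ ∑' f : ↥Sset, μ.restrict (T f) B := by
    set B1 : Set Ωs := ⋂ f : ↥Sset, toMeasurable (μ.restrict (T f)) B with hB1
    set B2 : Set Ωs := toMeasurable (μ.restrict A) B with hB2
    have hB'meas : MeasurableSet (B1 ∩ B2) :=
      (MeasurableSet.iInter (fun f => measurableSet_toMeasurable _ _)).inter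
        (measurableSet_toMeasurable _ _)
    have hBB' : B ⊆ B1 ∩ B2 :=
      Set.subset_inter (Set.subset_iInter fun f => subset_toMeasurable _ _)
        (subset_toMeasurable _ _)
    have h1 : μ.restrict A B = μ.restrict A (B1 ∩ B2) := by
      refine le_antisymm (measure_mono hBB') ?_
      calc μ.restrict A (B1 ∩ B2) ≤ μ.restrict A B2 := measure_mono Set.inter_subset_right
      _ = μ.restrict A B := measure_toMeasurable B
    have h2 : μ.restrict A (B1 ∩ B2) = μ ((B1 ∩ B2) ∩ A) :=
      Measure.restrict_apply hB'meas
    have h3 : μ ((B1 ∩ B2) ∩ A) ≤ ∑' f : ↥Sset, μ ((B1 ∩ B2) ∩ T f) := by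
      rw [hA, Set.inter_iUnion]
      exact measure_iUnion_le _
    have h4 : ∀ f : ↥Sset, μ ((B1 ∩ B2) ∩ T f) ≤ μ.restrict (T f) B := by
      intro f
      rw [← Measure.restrict_apply (μ := μ) (s := T f) hB'meas]
      calc μ.restrict (T f) (B1 ∩ B2)
          ≤ μ.restrict (T f) (toMeasurable (μ.restrict (T f)) B) :=
            measure_mono (le_trans Set.inter_subset_left (Set.iInter_subset _ f))
      _ = μ.restrict (T f) B := measure_toMeasurable B
    calc μ.restrict A B = μ ((B1 ∩ B2) ∩ A) := h1.trans h2
    _ ≤ ∑' f : ↥Sset, μ ((B1 ∩ B2) ∩ T f) := h3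
    _ ≤ ∑' f : ↥Sset, μ.restrict (T f) B := ENNReal.tsum_le_tsum h4
  -- Step 2: bound each history's restricted mass by the kernel
  have step2 : ∀ f : ↥Sset, μ.restrict (T f) B
      ≤ μ (T f) * spiderKernel p (f.val (Fin.last t)) v := by
    intro f
    have hTf : T f = histSet Y t (extFin f.val) := preimage_singleton t f.val
    by_cases hz : μ (histSet Y t (extFin f.val)) = 0
    · have : μ.restrict (T f) B ≤ μ (T f) := by
        calc μ.restrict (T f) B ≤ μ.restrict (T f) Set.univ := measure_mono (Set.subset_univ B)
        _ = μ (Set.univ ∩ T f) := Measure.restrict_apply MeasurableSet.univ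
        _ = μ (T f) := by rw [Set.univ_inter]
      rw [hTf] at this ⊢
      rw [hz] at this
      exact le_trans this zero_le
    · have hval : extFin f.val t = f.val (Fin.last t) := extFin_fin f.val (Fin.last t)
      rw [hTf, ← hval]
      rw [restrict_hist hM t (extFin f.val) v hz]
  -- Step 3: identify the sum
  have step3 : ∑' f : ↥Sset, μ (traj Y t ⁻¹' {f.val}) * spiderKernel p (f.val (Fin.last t)) v
      = μ {ω | Y c ω = none ∧ Y (t + 1) ω = v} := by
    rw [tsum_subtype Sset
      (fun f => μ (traj Y t ⁻¹' {f}) * spiderKernel p (f (Fin.last t)) v)]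
    rw [step_D hY0 hM hp0 hp hct v, ← sum_reorg hY0 hM hp0 hp hct v]
    apply tsum_congr
    intro f
    rw [Set.indicator_apply]
    by_cases hf : f ∈ Sset
    · rw [if_pos hf, hist_fin hY0 hM hp0 hp t f]
      by_cases h0 : f 0 = none
      · rw [if_pos h0, if_pos ⟨hf, h0⟩]
      · rw [if_neg h0, if_neg (fun hcc => h0 hcc.2), zero_mul]
    · rw [if_neg hf, if_neg (fun hcc => hf hcc.1)]
  calc μ.restrict A B ≤ ∑' f : ↥Sset, μ.restrict (T f) B := step1
  _ ≤ ∑' f : ↥Sset, μ (traj Y t ⁻¹' {f.val}) * spiderKernel p (f.val (Fin.last t)) v :=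
      ENNReal.tsum_le_tsum step2
  _ = μ {ω | Y c ω = none ∧ Y (t + 1) ω = v} := step3

lemma measure_origin_pos [IsProbabilityMeasure μ]
    (hY0 : ∀ ω, Y 0 ω = none)
    (hM : ∀ (n : ℕ) (h : ℕ → SpiderVertex N) (v : SpiderVertex N),
      μ {ω | ∀ i ≤ n, Y i ω = h i} ≠ 0 →
      (μ[|{ω | ∀ i ≤ n, Y i ω = h i}]) {ω | Y (n+1) ω = v} = spiderKernel p (h n) v)
    (hp0 : ∀ j, 0 ≤ p j) (hp : ∑ j, p j = 1) (k : ℕ) :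
    μ {ω | Y (2 * k) ω = none} ≠ 0 := by
  classical
  have hex : ∃ j0 : Fin N, 0 < p j0 := by
    by_contra hc
    push_neg at hc
    have hle : ∑ j, p j ≤ 0 := Finset.sum_nonpos (fun j _ => hc j)
    rw [hp] at hle
    linarith
  obtain ⟨j0, hj0⟩ := hex
  set h : ℕ → SpiderVertex N := fun i => if i % 2 = 0 then none else some (j0, 0) with hh
  have hsub : histSet Y (2 * k) h ⊆ {ω | Y (2 * k) ω = none} := by
    intro ω hω
    have h2 := hω (2 * k) le_rfl
    show Y (2 * k) ω = none
    rw [h2, hh]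
    simp [Nat.mul_mod_right]
  have h0 : h 0 = none := by simp [hh]
  have hchain := chain hY0 hM hp0 hp (2 * k) h
  rw [if_pos h0] at hchain
  have hw : ∀ K : ℕ, wt p (2 * K) h = (ENNReal.ofReal (p j0) * (1 / 2)) ^ K := by
    intro K
    induction K with
    | zero => simp [wt]
    | succ K ihK =>
      have h2K : 2 * (K + 1) = (2 * K) + 1 + 1 := by ring
      rw [h2K, wt, Finset.prod_range_succ, Finset.prod_range_succ, ← wt, ihK]
      have e1 : h (2 * K) = none := by simp [hh, Nat.mul_mod_right]
      have e2 : h (2 * K + 1) = some (j0, 0) := by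
        have hm : (2 * K + 1) % 2 = 1 := by omega
        simp [hh, hm]
      have e3 : h (2 * K + 1 + 1) = none := by
        have hm : (2 * K + 1 + 1) % 2 = 0 := by omega
        simp [hh, hm]
      rw [e1, e2, e3]
      have k1 : spiderKernel p (none : SpiderVertex N) (some (j0, 0)) = ENNReal.ofReal (p j0) := rfl
      have k2 : spiderKernel p (some (j0, 0)) (none : SpiderVertex N) = 1 / 2 := rfl
      rw [k1, k2, pow_succ]
      ring
  intro hzero
  have hle2 : μ (histSet Y (2 * k) h) ≤ μ {ω | Y (2 * k) ω = none} := measure_mono hsub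
  rw [hzero] at hle2
  have hwz : wt p (2 * k) h = 0 := le_antisymm (hchain ▸ hle2) zero_le
  rw [hw k] at hwz
  have hne : ENNReal.ofReal (p j0) * (1 / 2 : ℝ≥0∞) ≠ 0 := by
    apply mul_ne_zero
    · intro hcc
      rw [ENNReal.ofReal_eq_zero] at hcc
      linarith
    · simp
  exact pow_ne_zero k hne hwz


open Classical in
lemma qsum_none (F : SpiderVertex N → ℝ≥0∞) :
    ∑' u : SpiderVertex N, F u * spiderKernel p u none
      = ∑ j : Fin N, F (some (j, 0)) * (1/2) := by
  rw [tsum_option]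
  rw [show spiderKernel p (none : SpiderVertex N) none = 0 from rfl, mul_zero, zero_add,
    ENNReal.tsum_prod']
  have hin : ∀ j : Fin N, (∑' r : ℕ, F (some (j, r)) * spiderKernel p (some (j, r)) none)
      = F (some (j, 0)) * (1/2) := by
    intro j
    have hc : ∀ r : ℕ, F (some (j, r)) * spiderKernel p (some (j, r)) none
        = if r = 0 then F (some (j, 0)) * (1/2) else 0 := by
      intro r
      show F (some (j, r)) * (if r = 0 then (1/2 : ℝ≥0∞) else 0) = _
      by_cases hr : r = 0
      · subst hr; rw [if_pos rfl, if_pos rfl]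
      · rw [if_neg hr, if_neg hr, mul_zero]
    rw [tsum_congr hc]
    exact tsum_ite_eq 0 _
  rw [tsum_congr hin, tsum_fintype]

open Classical in
lemma qsum_zero (F : SpiderVertex N → ℝ≥0∞) (l : Fin N) :
    ∑' u : SpiderVertex N, F u * spiderKernel p u (some (l, 0))
      = F none * ENNReal.ofReal (p l) + F (some (l, 1)) * (1/2) := by
  have hsum : ∑' x : Fin N × ℕ, F (some x) * spiderKernel p (some x) (some (l, 0))
      = F (some (l, 1)) * (1/2) := by
    have hc : ∀ x : Fin N × ℕ, F (some x) * spiderKernel p (some x) (some (l, 0))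
        = if x = (l, 1) then F (some (l, 1)) * (1/2) else 0 := by
      rintro ⟨a, b⟩
      show F (some (a, b)) * (if l = a ∧ (0 + 1 = b ∨ 0 = b + 1) then (1/2 : ℝ≥0∞) else 0) = _
      by_cases hx : (a, b) = ((l, 1) : Fin N × ℕ)
      · rw [Prod.mk.injEq] at hx
        obtain ⟨rfl, rfl⟩ := hx
        rw [if_pos ⟨rfl, Or.inl rfl⟩, if_pos rfl]
      · rw [if_neg, if_neg hx, mul_zero]
        rintro ⟨rfl, hb | hb⟩
        · exact hx (by rw [Prod.mk.injEq]; exact ⟨rfl, by omega⟩)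
        · omega
    rw [tsum_congr hc]
    exact tsum_ite_eq _ _
  rw [tsum_option, hsum]
  rfl

open Classical in
lemma qsum_succ (F : SpiderVertex N → ℝ≥0∞) (l : Fin N) (m : ℕ) :
    ∑' u : SpiderVertex N, F u * spiderKernel p u (some (l, m + 1))
      = F (some (l, m)) * (1/2) + F (some (l, m + 2)) * (1/2) := by
  rw [tsum_option]
  have h0 : spiderKernel p (none : SpiderVertex N) (some (l, m + 1)) = 0 := by
    show (if m + 1 = 0 then ENNReal.ofReal (p l) else 0) = 0
    simp
  rw [h0, mul_zero, zero_add]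
  have hc : ∀ x : Fin N × ℕ, F (some x) * spiderKernel p (some x) (some (l, m + 1))
      = (if x = (l, m) then F (some (l, m)) * (1/2) else 0)
        + (if x = (l, m + 2) then F (some (l, m + 2)) * (1/2) else 0) := by
    rintro ⟨a, b⟩
    show F (some (a, b))
        * (if l = a ∧ (m + 1 + 1 = b ∨ m + 1 = b + 1) then (1/2 : ℝ≥0∞) else 0) = _
    by_cases h1 : (a, b) = ((l, m) : Fin N × ℕ)
    · rw [Prod.mk.injEq] at h1
      obtain ⟨rfl, rfl⟩ := h1
      rw [if_pos ⟨rfl, Or.inr rfl⟩, if_pos rfl, if_neg (by rw [Prod.mk.injEq]; rintro ⟨-, hh⟩; omega),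
        add_zero]
    · by_cases h2 : (a, b) = ((l, m + 2) : Fin N × ℕ)
      · rw [Prod.mk.injEq] at h2
        obtain ⟨rfl, rfl⟩ := h2
        rw [if_pos ⟨rfl, Or.inl rfl⟩, if_neg h1, if_pos rfl, zero_add]
      · rw [if_neg, if_neg h1, if_neg h2, add_zero, mul_zero]
        rintro ⟨rfl, hb | hb⟩
        · exact h2 (by rw [Prod.mk.injEq]; exact ⟨rfl, by omega⟩)
        · exact h1 (by rw [Prod.mk.injEq]; exact ⟨rfl, by omega⟩)
  rw [tsum_congr hc, ENNReal.tsum_add, tsum_ite_eq, tsum_ite_eq]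

lemma half_half (x : ℝ≥0∞) : x * (1/2) + x * (1/2) = x := by
  rw [← mul_add, ENNReal.add_halves, mul_one]

lemma case0_arith (P a0 a2 am2 : ℝ≥0∞) :
    a0 * P + P * (a2 + am2) * (1/2)
      = P * ((a0 * (1/2) + a2 * (1/2)) + (am2 * (1/2) + a0 * (1/2))) := by
  have h : (a0 * (1/2) + a2 * (1/2)) + (am2 * (1/2) + a0 * (1/2))
      = (a0 * (1/2) + a0 * (1/2)) + (a2 + am2) * (1/2) := by ring
  rw [h, half_half]
  ring

lemma caseS_arith (P b1 bm1 b3 bm3 : ℝ≥0∞) :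
    P * (b1 + bm1) * (1/2) + P * (b3 + bm3) * (1/2)
      = P * ((b1 * (1/2) + b3 * (1/2)) + (bm3 * (1/2) + bm1 * (1/2))) := by ring

end Walk

section RW

variable {Ω2 : Type*} [MeasurableSpace Ω2] {μ' : Measure Ω2}
variable {X : ℕ → Ω2 → ℤ} {S : ℕ → Ω2 → ℤ}

lemma S_meas (hmeas : ∀ i, Measurable (X i))
    (hS : ∀ n ω, S n ω = ∑ i ∈ Finset.range n, X i ω) (t : ℕ) : Measurable (S t) := by
  have he : S t = fun ω => ∑ i ∈ Finset.range t, X i ω := funext (hS t)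
  rw [he]
  exact Finset.measurable_sum _ (fun i _ => hmeas i)

lemma r_zero [IsProbabilityMeasure μ']
    (hS : ∀ n ω, S n ω = ∑ i ∈ Finset.range n, X i ω) (x : ℤ) :
    μ' {ω | S 0 ω = x} = if x = 0 then 1 else 0 := by
  by_cases hx : x = 0
  · subst hx
    have he : {ω | S 0 ω = 0} = Set.univ := by
      ext ω; simp [hS 0 ω]
    rw [he, if_pos rfl, measure_univ]
  · have he : {ω | S 0 ω = x} = ∅ := by
      refine Set.eq_empty_iff_forall_notMem.2 (fun ω hω => hx ?_)
      have h0 : S 0 ω = 0 := by rw [hS 0 ω]; simp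
      rw [← hω, h0]
    rw [he, if_neg hx, measure_empty]

lemma r_succ [IsProbabilityMeasure μ'] (hmeas : ∀ i, Measurable (X i))
    (hindep : iIndepFun X μ')
    (h1 : ∀ i, μ' {ω | X i ω = 1} = 1/2) (h2 : ∀ i, μ' {ω | X i ω = -1} = 1/2)
    (hS : ∀ n ω, S n ω = ∑ i ∈ Finset.range n, X i ω) (t : ℕ) (x : ℤ) :
    μ' {ω | S (t + 1) ω = x}
      = μ' {ω | S t ω = x - 1} * (1/2) + μ' {ω | S t ω = x + 1} * (1/2) := by
  have hSt : Measurable (S t) := S_meas hmeas hS t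
  have hXt : Measurable (X t) := hmeas t
  have hidp : IndepFun (S t) (X t) μ' := by
    have hfe : (∑ j ∈ Finset.range t, X j) = S t :=
      funext fun ω => by rw [Finset.sum_apply, ← hS t ω]
    have h := hindep.indepFun_sum_range_succ hmeas t
    rwa [hfe] at h
  have hG1 : MeasurableSet (X t ⁻¹' {1}) := hXt (measurableSet_singleton _)
  have hG2 : MeasurableSet (X t ⁻¹' {-1}) := hXt (measurableSet_singleton _)
  have hdisj : Disjoint (X t ⁻¹' {(1 : ℤ)}) (X t ⁻¹' {(-1 : ℤ)}) := by
    rw [Set.disjoint_left]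
    intro ω hω1 hω2
    have e1 : X t ω = 1 := hω1
    have e2 : X t ω = -1 := hω2
    omega
  have hUmeas : MeasurableSet (X t ⁻¹' {(1 : ℤ)} ∪ X t ⁻¹' {(-1 : ℤ)}) := hG1.union hG2
  have hU1 : μ' (X t ⁻¹' {(1 : ℤ)} ∪ X t ⁻¹' {(-1 : ℤ)}) = 1 := by
    rw [measure_union hdisj hG2]
    have e1 : μ' (X t ⁻¹' {(1 : ℤ)}) = 1/2 := h1 t
    have e2 : μ' (X t ⁻¹' {(-1 : ℤ)}) = 1/2 := h2 t
    rw [e1, e2]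
    exact ENNReal.add_halves 1
  have hUc : μ' ((X t ⁻¹' {(1 : ℤ)} ∪ X t ⁻¹' {(-1 : ℤ)})ᶜ) = 0 := by
    rw [measure_compl hUmeas (measure_ne_top μ' _), hU1, measure_univ, tsub_self]
  set B : Set Ω2 := {ω | S (t + 1) ω = x} with hB
  have hBsplit : μ' B = μ' (B ∩ (X t ⁻¹' {(1 : ℤ)} ∪ X t ⁻¹' {(-1 : ℤ)})) := by
    rw [← measure_inter_add_diff B hUmeas]
    have hd0 : μ' (B \ (X t ⁻¹' {(1 : ℤ)} ∪ X t ⁻¹' {(-1 : ℤ)})) = 0 :=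
      measure_mono_null (fun ω hω => hω.2) hUc
    rw [hd0, add_zero]
  have hstep : ∀ ω, S (t + 1) ω = S t ω + X t ω := fun ω => by
    rw [hS (t + 1) ω, Finset.sum_range_succ, ← hS t ω]
  have hE1 : B ∩ X t ⁻¹' {(1 : ℤ)} = S t ⁻¹' {x - 1} ∩ X t ⁻¹' {(1 : ℤ)} := by
    ext ω
    simp only [Set.mem_inter_iff, Set.mem_preimage, Set.mem_singleton_iff, hB,
      Set.mem_setOf_eq]
    constructor
    · rintro ⟨hb, hx1⟩
      refine ⟨?_, hx1⟩
      have := hstep ω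
      omega
    · rintro ⟨hb, hx1⟩
      refine ⟨?_, hx1⟩
      have := hstep ω
      omega
  have hE2 : B ∩ X t ⁻¹' {(-1 : ℤ)} = S t ⁻¹' {x + 1} ∩ X t ⁻¹' {(-1 : ℤ)} := by
    ext ω
    simp only [Set.mem_inter_iff, Set.mem_preimage, Set.mem_singleton_iff, hB,
      Set.mem_setOf_eq]
    constructor
    · rintro ⟨hb, hx1⟩
      refine ⟨?_, hx1⟩
      have := hstep ω
      omega
    · rintro ⟨hb, hx1⟩
      refine ⟨?_, hx1⟩
      have := hstep ω
      omega
  have hmul1 : μ' (S t ⁻¹' {x - 1} ∩ X t ⁻¹' {(1 : ℤ)}) = μ' {ω | S t ω = x - 1} * (1/2) := by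
    rw [hidp.measure_inter_preimage_eq_mul {x - 1} {(1 : ℤ)} (measurableSet_singleton _)
      (measurableSet_singleton _)]
    have e1 : μ' (X t ⁻¹' {(1 : ℤ)}) = 1/2 := h1 t
    rw [e1]
    rfl
  have hmul2 : μ' (S t ⁻¹' {x + 1} ∩ X t ⁻¹' {(-1 : ℤ)}) = μ' {ω | S t ω = x + 1} * (1/2) := by
    rw [hidp.measure_inter_preimage_eq_mul {x + 1} {(-1 : ℤ)} (measurableSet_singleton _)
      (measurableSet_singleton _)]
    have e2 : μ' (X t ⁻¹' {(-1 : ℤ)}) = 1/2 := h2 t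
    rw [e2]
    rfl
  calc μ' {ω | S (t + 1) ω = x}
      = μ' (B ∩ (X t ⁻¹' {(1 : ℤ)} ∪ X t ⁻¹' {(-1 : ℤ)})) := hBsplit
  _ = μ' ((B ∩ X t ⁻¹' {(1 : ℤ)}) ∪ (B ∩ X t ⁻¹' {(-1 : ℤ)})) := by
      rw [Set.inter_union_distrib_left]
  _ = μ' (S t ⁻¹' {x - 1} ∩ X t ⁻¹' {(1 : ℤ)}) + μ' (S t ⁻¹' {x + 1} ∩ X t ⁻¹' {(-1 : ℤ)}) := by
      rw [hE1, hE2]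
      exact measure_union (hdisj.mono Set.inter_subset_right Set.inter_subset_right)
        ((hSt (measurableSet_singleton _)).inter hG2)
  _ = μ' {ω | S t ω = x - 1} * (1/2) + μ' {ω | S t ω = x + 1} * (1/2) := by
      rw [hmul1, hmul2]

lemma r_symm [IsProbabilityMeasure μ'] (hmeas : ∀ i, Measurable (X i))
    (hindep : iIndepFun X μ')
    (h1 : ∀ i, μ' {ω | X i ω = 1} = 1/2) (h2 : ∀ i, μ' {ω | X i ω = -1} = 1/2)
    (hS : ∀ n ω, S n ω = ∑ i ∈ Finset.range n, X i ω) :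
    ∀ (t : ℕ) (x : ℤ), μ' {ω | S t ω = -x} = μ' {ω | S t ω = x} := by
  intro t
  induction t with
  | zero =>
    intro x
    rw [r_zero hS, r_zero hS]
    simp [neg_eq_zero]
  | succ t ih =>
    intro x
    rw [r_succ hmeas hindep h1 h2 hS t (-x), r_succ hmeas hindep h1 h2 hS t x]
    have e1 : μ' {ω | S t ω = -x - 1} = μ' {ω | S t ω = x + 1} := by
      rw [show (-x - 1 : ℤ) = -(x + 1) by ring]
      exact ih (x + 1)
    have e2 : μ' {ω | S t ω = -x + 1} = μ' {ω | S t ω = x - 1} := by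
      rw [show (-x + 1 : ℤ) = -(x - 1) by ring]
      exact ih (x - 1)
    rw [e1, e2, add_comm]

end RW


section Inv

variable {Ω2 : Type*} [MeasurableSpace Ω2] {μ' : Measure Ω2}
variable {X : ℕ → Ω2 → ℤ} {S : ℕ → Ω2 → ℤ} {N : ℕ} {p : Fin N → ℝ}

lemma q_eq_r [IsProbabilityMeasure μ'] (hmeas : ∀ i, Measurable (X i))
    (hindep : iIndepFun X μ')
    (h1 : ∀ i, μ' {ω | X i ω = 1} = 1/2) (h2 : ∀ i, μ' {ω | X i ω = -1} = 1/2)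
    (hS : ∀ n ω, S n ω = ∑ i ∈ Finset.range n, X i ω)
    (hp0 : ∀ j, 0 ≤ p j) (hp : ∑ j, p j = 1) :
    ∀ t : ℕ,
      qdist p t (none : SpiderVertex N) = μ' {ω | S t ω = 0} ∧
      ∀ (l : Fin N) (m : ℕ), qdist p t (some (l, m))
        = ENNReal.ofReal (p l)
          * (μ' {ω | S t ω = (m : ℤ) + 1} + μ' {ω | S t ω = -((m : ℤ) + 1)}) := by
  have harg : ∀ (t : ℕ) (a b : ℤ), a = b → μ' {ω | S t ω = a} = μ' {ω | S t ω = b} :=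
    fun t a b hab => by rw [hab]
  intro t
  induction t with
  | zero =>
    constructor
    · rw [r_zero hS 0, if_pos rfl]
      simp [qdist]
    · intro l m
      have hz1 : μ' {ω | S 0 ω = (m : ℤ) + 1} = 0 := by
        rw [r_zero hS, if_neg (by omega)]
      have hz2 : μ' {ω | S 0 ω = -((m : ℤ) + 1)} = 0 := by
        rw [r_zero hS, if_neg (by omega)]
      rw [hz1, hz2]
      simp [qdist]
  | succ t ih =>
    obtain ⟨ih0, ihs⟩ := ih
    constructor
    · show ∑' u : SpiderVertex N, qdist p t u * spiderKernel p u none = _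
      rw [qsum_none]
      have hterm : ∀ j : Fin N, qdist p t (some (j, 0)) * (1/2 : ℝ≥0∞)
          = ENNReal.ofReal (p j)
            * (μ' {ω | S t ω = 0 - 1} * (1/2) + μ' {ω | S t ω = 0 + 1} * (1/2)) := by
        intro j
        rw [ihs j 0, harg t _ _ (show ((0:ℕ) : ℤ) + 1 = 0 + 1 by omega),
          harg t _ _ (show -(((0:ℕ) : ℤ) + 1) = 0 - 1 by omega)]
        ring
      rw [Finset.sum_congr rfl (fun j _ => hterm j), ← Finset.sum_mul,
        ← ENNReal.ofReal_sum_of_nonneg (fun j _ => hp0 j), hp, ENNReal.ofReal_one, one_mul,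
        ← r_succ hmeas hindep h1 h2 hS t 0]
    · intro l m
      show ∑' u : SpiderVertex N, qdist p t u * spiderKernel p u (some (l, m)) = _
      cases m with
      | zero =>
        rw [qsum_zero, ih0, ihs l 1,
          harg t _ _ (show ((1:ℕ) : ℤ) + 1 = 2 by omega),
          harg t _ _ (show -(((1:ℕ) : ℤ) + 1) = -2 by omega),
          r_succ hmeas hindep h1 h2 hS t (((0:ℕ) : ℤ) + 1),
          r_succ hmeas hindep h1 h2 hS t (-(((0:ℕ) : ℤ) + 1)),
          harg t _ _ (show ((0:ℕ) : ℤ) + 1 - 1 = 0 by omega),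
          harg t _ _ (show ((0:ℕ) : ℤ) + 1 + 1 = 2 by omega),
          harg t _ _ (show -(((0:ℕ) : ℤ) + 1) - 1 = -2 by omega),
          harg t _ _ (show -(((0:ℕ) : ℤ) + 1) + 1 = 0 by omega)]
        exact case0_arith _ _ _ _
      | succ m =>
        rw [qsum_succ, ihs l m, ihs l (m + 2),
          harg t _ _ (show ((m + 2 : ℕ) : ℤ) + 1 = (m : ℤ) + 3 by omega),
          harg t _ _ (show -(((m + 2 : ℕ) : ℤ) + 1) = -((m : ℤ) + 3) by omega),
          r_succ hmeas hindep h1 h2 hS t (((m + 1 : ℕ) : ℤ) + 1),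
          r_succ hmeas hindep h1 h2 hS t (-(((m + 1 : ℕ) : ℤ) + 1)),
          harg t _ _ (show ((m + 1 : ℕ) : ℤ) + 1 - 1 = (m : ℤ) + 1 by omega),
          harg t _ _ (show ((m + 1 : ℕ) : ℤ) + 1 + 1 = (m : ℤ) + 3 by omega),
          harg t _ _ (show -(((m + 1 : ℕ) : ℤ) + 1) - 1 = -((m : ℤ) + 3) by omega),
          harg t _ _ (show -(((m + 1 : ℕ) : ℤ) + 1) + 1 = -((m : ℤ) + 1) by omega)]
        exact caseS_arith _ _ _ _ _

end Inv

end SpiderAux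

open SpiderAux

/-- Transition probability of the spider walk from the origin:
`P(S_{2n+2k} = v(2j,ℓ) | S_{2k} = 0) = 2 p_ℓ P(S(2n) = 2j)`, where `S` is a simple
symmetric random walk on `ℤ`. -/
theorem spider_transition_from_origin
    {Ω Ω' : Type*} [MeasurableSpace Ω] [MeasurableSpace Ω']
    (μ : Measure Ω) [IsProbabilityMeasure μ]
    (μ' : Measure Ω') [IsProbabilityMeasure μ']
    (N : ℕ) (hN : 1 ≤ N) (p : Fin N → ℝ) (hp0 : ∀ j, 0 ≤ p j) (hp : ∑ j, p j = 1)
    -- the spider walk `Y`, a Markov chain with kernel `spiderKernel p` started at the origin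
    (Y : ℕ → Ω → SpiderVertex N)
    (hY0 : ∀ ω, Y 0 ω = none)
    (hMarkov : ∀ (n : ℕ) (h : ℕ → SpiderVertex N) (v : SpiderVertex N),
      μ {ω | ∀ i ≤ n, Y i ω = h i} ≠ 0 →
      (μ[|{ω | ∀ i ≤ n, Y i ω = h i}]) {ω | Y (n+1) ω = v} = spiderKernel p (h n) v)
    -- a simple symmetric random walk `S` on `ℤ`
    (X : ℕ → Ω' → ℤ) (hmeas : ∀ i, Measurable (X i))
    (hindep : iIndepFun X μ')
    (h1 : ∀ i, μ' {ω | X i ω = 1} = 1/2) (h2 : ∀ i, μ' {ω | X i ω = -1} = 1/2)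
    (S : ℕ → Ω' → ℤ) (hS : ∀ n ω, S n ω = ∑ i ∈ Finset.range n, X i ω)
    (n k j : ℕ) (hn : 1 ≤ n) (hj : 1 ≤ j) (hjn : j ≤ n) (ℓ : Fin N) :
    ((μ[|{ω | Y (2*k) ω = none}]) {ω | Y (2*n+2*k) ω = some (ℓ, 2*j - 1)}).toReal
      = 2 * p ℓ * (μ' {ω | S (2*n) ω = 2*j}).toReal := by
  classical
  have hA0 : μ {ω | Y (2*k) ω = none} ≠ 0 := measure_origin_pos hY0 hMarkov hp0 hp k
  have hT : 2*n+2*k = 2*k + (2*n - 1) + 1 := by omega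
  rw [hT]
  have hct : 2*k ≤ 2*k + (2*n - 1) := Nat.le_add_right _ _
  have hres := restrict_eq_inter (μ := μ) hY0 hMarkov hp0 hp hct (some (ℓ, 2*j - 1))
  have hcond : (μ[|{ω | Y (2*k) ω = none}])
        {ω | Y (2*k + (2*n - 1) + 1) ω = some (ℓ, 2*j - 1)}
      = (μ {ω | Y (2*k) ω = none})⁻¹
        * μ {ω | Y (2*k) ω = none ∧ Y (2*k + (2*n - 1) + 1) ω = some (ℓ, 2*j - 1)} := by
    rw [ProbabilityTheory.cond, Measure.smul_apply, smul_eq_mul, hres]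
  rw [hcond]
  have hD : μ {ω | Y (2*k) ω = none ∧ Y (2*k + (2*n - 1) + 1) ω = some (ℓ, 2*j - 1)}
      = μ {ω | Y (2*k) ω = none} * qdist p (2*n) (some (ℓ, 2*j - 1)) := by
    rw [show 2*k + (2*n - 1) + 1 = 2*k + 2*n from by omega]
    exact measure_D_eq_q hY0 hMarkov hp0 hp (2*k) (2*n) _
  rw [hD, ← mul_assoc, ENNReal.inv_mul_cancel hA0 (measure_ne_top μ _), one_mul]
  have hq := (q_eq_r (μ' := μ') (p := p) hmeas hindep h1 h2 hS hp0 hp (2*n)).2 ℓ (2*j - 1)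
  rw [hq]
  have harg : ∀ (a b : ℤ), a = b → μ' {ω | S (2*n) ω = a} = μ' {ω | S (2*n) ω = b} :=
    fun a b hab => by rw [hab]
  rw [harg _ _ (show ((2*j - 1 : ℕ) : ℤ) + 1 = 2*(j : ℤ) by omega),
    harg _ _ (show -(((2*j - 1 : ℕ) : ℤ) + 1) = -(2*(j : ℤ)) by omega),
    r_symm hmeas hindep h1 h2 hS (2*n) (2*(j : ℤ)), ← two_mul]
  rw [ENNReal.toReal_mul, ENNReal.toReal_mul, ENNReal.toReal_ofReal (hp0 ℓ),
    ENNReal.toReal_ofNat]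
  ring
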